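/- Let n ≥ 1, A ∈ O^±(n,n,ℤ), and define η_A : ℝ^{2n} × ℝ^{2n} → ℝ/ℤ by η_A(a,a') := aᵀ·(B_A)_low·a' mod ℤ. Then the pair (A, η_A) satisfies the object axioms: (A1) η_A(m,m') = 0 for all m, m' ∈ ℤ^{2n}; (A2) η_A(m,a) + iso(A)·(aᵀJm mod ℤ) = η_A(a,m) + ((Aa)ᵀJ(Am) mod ℤ) in ℝ/ℤ for all m ∈ ℤ^{2n} and a ∈ ℝ^{2n}; (A3) η_A(a,a') + η_A(a+a',a'') = η_A(a',a'') + η_A(a,a'+a'') for all a, a', a'' ∈ ℝ^{2n}. -/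
import Mathlib


open Matrix

/-- Square integer matrices of size `2n`. -/
abbrev Mat (n : ℕ) := Matrix (Fin (n + n)) (Fin (n + n)) ℤ

/-- The `2n × 2n` block matrix `[[A, B], [C, D]]`. -/
def fromB {n : ℕ} (A B C D : Matrix (Fin n) (Fin n) ℤ) : Mat n :=
  Matrix.reindex finSumFinEquiv finSumFinEquiv (Matrix.fromBlocks A B C D)

/-- The block matrix `I = [[0, Eₙ], [Eₙ, 0]]`. -/
def Imat (n : ℕ) : Mat n := fromB 0 1 1 0

/-- Membership in the integral split pseudo-orthogonal group `O^±(n,n,ℤ)`: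
`Aᵀ I A = I` or `Aᵀ I A = -I`. -/
def IsOpm (n : ℕ) (A : Mat n) : Prop :=
  Aᵀ * Imat n * A = Imat n ∨ Aᵀ * Imat n * A = -Imat n

/-- The block matrix `J = [[0, 0], [Eₙ, 0]]`. -/
def Jmat (n : ℕ) : Mat n := fromB 0 0 1 0

/-- The sign `iso(A) ∈ {1, -1}` with `Aᵀ I A = iso(A) • I` (for `A ∈ O^±(n,n,ℤ)`). -/
noncomputable def iso (n : ℕ) (A : Mat n) : ℤ :=
  if Aᵀ * Imat n * A = Imat n then 1 else -1

/-- For a (skew-symmetric) integer matrix `M`, its strictly lower triangular part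
`M_low`, with `(M_low)ᵢⱼ = Mᵢⱼ` for `i > j` and `0` otherwise. -/
def lowm {N : ℕ} (M : Matrix (Fin N) (Fin N) ℤ) : Matrix (Fin N) (Fin N) ℤ :=
  Matrix.of fun i j => if j < i then M i j else 0

/-- The diagonal of a matrix, as a vector `M^{diag}`. -/
def diagv {N : ℕ} (M : Matrix (Fin N) (Fin N) ℤ) : Fin N → ℤ := fun i => M i i

/-- The skew-symmetric matrix `B_A := iso(A)·J − Aᵀ J A`. -/
noncomputable def Bmat (n : ℕ) (A : Mat n) : Mat n := iso n A • Jmat n - Aᵀ * Jmat n * A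

/-- `η_A(a,a') := aᵀ·(B_A)_low·a'  mod ℤ`. -/
noncomputable def etaA (n : ℕ) (A : Mat n) (a a' : Fin (n + n) → ℝ) : AddCircle (1 : ℝ) :=
  ((∑ i, ∑ j, a i * ((lowm (Bmat n A)) i j : ℝ) * a' j : ℝ) : AddCircle (1 : ℝ))

/-- The bilinear form `[a,b] = aᵀ J b` on `ℝ^{2n}`. -/
def bilJ (n : ℕ) (a b : Fin (n + n) → ℝ) : ℝ :=
  ∑ i, ∑ j, a i * ((Jmat n) i j : ℝ) * b j


section Aux
open Matrix

lemma sum_eq_dot {N : ℕ} (M : Matrix (Fin N) (Fin N) ℤ) (a b : Fin N → ℝ) :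
    (∑ i, ∑ j, a i * (M i j : ℝ) * b j) = a ⬝ᵥ ((M.map (Int.cast : ℤ → ℝ)) *ᵥ b) := by
  simp [dotProduct, Matrix.mulVec, Finset.mul_sum, mul_assoc]

lemma dot_mulVec_left {N : ℕ} (M : Matrix (Fin N) (Fin N) ℝ) (a w : Fin N → ℝ) :
    (M *ᵥ a) ⬝ᵥ w = a ⬝ᵥ (Mᵀ *ᵥ w) := by
  simp only [dotProduct, Matrix.mulVec, Matrix.transpose_apply, Finset.sum_mul, Finset.mul_sum]
  rw [Finset.sum_comm]
  exact Finset.sum_congr rfl fun i _ => Finset.sum_congr rfl fun j _ => by ring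

lemma Imat_eq_J_add_Jt (n : ℕ) : Imat n = Jmat n + (Jmat n)ᵀ := by
  ext i j
  simp only [Imat, Jmat, fromB, Matrix.reindex_apply, Matrix.submatrix_apply,
    Matrix.transpose_apply, Matrix.add_apply]
  rcases h1 : finSumFinEquiv.symm i with a|a <;> rcases h2 : finSumFinEquiv.symm j with b|b <;>
    simp [Matrix.fromBlocks, Matrix.one_apply, eq_comm]

lemma Imat_ne_neg (n : ℕ) (hn : 1 ≤ n) : Imat n ≠ -Imat n := by
  intro h
  have := congrFun (congrFun h (finSumFinEquiv (Sum.inl (⟨0, hn⟩ : Fin n))))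
      (finSumFinEquiv (Sum.inr (⟨0, hn⟩ : Fin n)))
  simp only [Imat, fromB, Matrix.reindex_apply, Matrix.submatrix_apply, Matrix.neg_apply,
    Equiv.symm_apply_apply] at this
  simp [Matrix.fromBlocks, Matrix.one_apply] at this

lemma iso_spec (n : ℕ) (hn : 1 ≤ n) (A : Mat n) (hA : IsOpm n A) :
    Aᵀ * Imat n * A = iso n A • Imat n := by
  unfold iso
  split_ifs with h
  · simpa using h
  · rcases hA with h' | h'
    · exact absurd h' h
    · simpa using h'

lemma Bmat_skew (n : ℕ) (hn : 1 ≤ n) (A : Mat n) (hA : IsOpm n A) :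
    (Bmat n A)ᵀ = -Bmat n A := by
  have h := iso_spec n hn A hA
  have hI := Imat_eq_J_add_Jt n
  unfold Bmat
  have hJt : (Jmat n)ᵀ = Imat n - Jmat n := by rw [hI, add_sub_cancel_left]
  rw [Matrix.transpose_sub, Matrix.transpose_smul, Matrix.transpose_mul,
    Matrix.transpose_mul, Matrix.transpose_transpose, hJt]
  rw [show Aᵀ * ((Imat n - Jmat n) * A) = Aᵀ * Imat n * A - Aᵀ * Jmat n * A by
    noncomm_ring, h, hI]
  module

lemma Bmat_diag (n : ℕ) (hn : 1 ≤ n) (A : Mat n) (hA : IsOpm n A) (i : Fin (n + n)) :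
    Bmat n A i i = 0 := by
  have := congrFun (congrFun (Bmat_skew n hn A hA) i) i
  simp only [Matrix.transpose_apply, Matrix.neg_apply] at this
  omega

lemma lowm_decomp (n : ℕ) (hn : 1 ≤ n) (A : Mat n) (hA : IsOpm n A) :
    (lowm (Bmat n A))ᵀ = lowm (Bmat n A) - Bmat n A := by
  ext i j
  have hs := congrFun (congrFun (Bmat_skew n hn A hA) i) j
  simp only [Matrix.transpose_apply, Matrix.neg_apply] at hs
  simp only [Matrix.transpose_apply, Matrix.sub_apply, lowm, Matrix.of_apply]
  rcases lt_trichotomy i j with h | h | h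
  · simp [h, not_lt.mpr h.le, hs]
  · subst h; simp [Bmat_diag n hn A hA i]
  · simp [h, not_lt.mpr h.le]

lemma intCast_addCircle (x : ℤ) : ((x : ℝ) : AddCircle (1 : ℝ)) = 0 := by
  rw [AddCircle.coe_eq_zero_iff]
  exact ⟨x, by simp⟩

end Aux

/-- For `A ∈ O^±(n,n,ℤ)` the pair `(A, η_A)` satisfies the object axioms:
(A1) `η_A(m,m') = 0` for `m, m' ∈ ℤ^{2n}`;
(A2) `η_A(m,a) + iso(A)·(aᵀJm mod ℤ) = η_A(a,m) + ((Aa)ᵀJ(Am) mod ℤ)`;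
(A3) `η_A(a,a') + η_A(a+a',a'') = η_A(a',a'') + η_A(a,a'+a'')`. -/
theorem statement9 (n : ℕ) (hn : 1 ≤ n) (A : Mat n) (hA : IsOpm n A) :
    (∀ m m' : Fin (n + n) → ℤ,
      etaA n A (fun i => (m i : ℝ)) (fun i => (m' i : ℝ)) = 0) ∧
    (∀ (m : Fin (n + n) → ℤ) (a : Fin (n + n) → ℝ),
      etaA n A (fun i => (m i : ℝ)) a
          + (((iso n A : ℝ) * bilJ n a (fun i => (m i : ℝ)) : ℝ) : AddCircle (1 : ℝ))
        = etaA n A a (fun i => (m i : ℝ))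
          + ((bilJ n ((A.map (Int.cast : ℤ → ℝ)).mulVec a)
              ((A.map (Int.cast : ℤ → ℝ)).mulVec (fun i => (m i : ℝ))) : ℝ)
                : AddCircle (1 : ℝ))) ∧
    (∀ a a' a'' : Fin (n + n) → ℝ,
      etaA n A a a' + etaA n A (a + a') a''
        = etaA n A a' a'' + etaA n A a (a' + a'')) := by
  classical
  set L : Mat n := lowm (Bmat n A) with hL
  set L' : Matrix (Fin (n+n)) (Fin (n+n)) ℝ := L.map (Int.cast : ℤ → ℝ) with hL'
  set J' : Matrix (Fin (n+n)) (Fin (n+n)) ℝ := (Jmat n).map (Int.cast : ℤ → ℝ) with hJ'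
  set A' : Matrix (Fin (n+n)) (Fin (n+n)) ℝ := A.map (Int.cast : ℤ → ℝ) with hA'
  have heta : ∀ a b : Fin (n+n) → ℝ, etaA n A a b = ((a ⬝ᵥ (L' *ᵥ b) : ℝ) : AddCircle (1:ℝ)) := by
    intro a b; rw [etaA, sum_eq_dot]
  have hbilJ : ∀ a b : Fin (n+n) → ℝ, bilJ n a b = a ⬝ᵥ (J' *ᵥ b) := by
    intro a b; rw [bilJ, sum_eq_dot]
  have hBmap : (Bmat n A).map (Int.cast : ℤ → ℝ)
      = (iso n A : ℝ) • J' - A'ᵀ * J' * A' := by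
    ext i j
    simp only [Bmat, Matrix.map_apply, Matrix.sub_apply, Matrix.smul_apply, smul_eq_mul,
      Matrix.mul_apply, Matrix.transpose_apply, hJ', hA', Pi.smul_apply]
    push_cast
    ring_nf
  have hLtB : L'ᵀ = L' - (Bmat n A).map (Int.cast : ℤ → ℝ) := by
    ext i j
    have h2 := congrFun (congrFun (lowm_decomp n hn A hA) i) j
    simp only [Matrix.transpose_apply, Matrix.sub_apply, ← hL] at h2
    simp only [Matrix.transpose_apply, Matrix.sub_apply, Matrix.map_apply, hL']
    exact_mod_cast h2
  have hLt : L'ᵀ = L' - ((iso n A : ℝ) • J' - A'ᵀ * J' * A') := by rw [hLtB, hBmap]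
  refine ⟨?_, ?_, ?_⟩
  · intro m m'
    rw [heta]
    have h3 : ((fun i => (m i : ℝ)) ⬝ᵥ (L' *ᵥ (fun i => (m' i : ℝ))))
        = ((∑ i, ∑ j, m i * L i j * m' j : ℤ) : ℝ) := by
      simp [dotProduct, Matrix.mulVec, hL', Finset.mul_sum, mul_assoc]
    rw [h3, intCast_addCircle]
  · intro m a
    rw [heta, heta, hbilJ, hbilJ]
    have key : ((fun i => (m i : ℝ)) ⬝ᵥ (L' *ᵥ a))
        + (iso n A : ℝ) * (a ⬝ᵥ (J' *ᵥ (fun i => (m i : ℝ))))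
        = (a ⬝ᵥ (L' *ᵥ (fun i => (m i : ℝ))))
          + ((A' *ᵥ a) ⬝ᵥ (J' *ᵥ (A' *ᵥ (fun i => (m i : ℝ))))) := by
      set mv : Fin (n+n) → ℝ := fun i => (m i : ℝ)
      have h1 : mv ⬝ᵥ (L' *ᵥ a) = a ⬝ᵥ (L'ᵀ *ᵥ mv) := by
        rw [dotProduct_comm, dot_mulVec_left]
      have h2 : (A' *ᵥ a) ⬝ᵥ (J' *ᵥ (A' *ᵥ mv)) = a ⬝ᵥ ((A'ᵀ * J' * A') *ᵥ mv) := by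
        rw [dot_mulVec_left, Matrix.mulVec_mulVec, Matrix.mulVec_mulVec]
      rw [h1, h2, hLt]
      simp only [Matrix.sub_mulVec, Matrix.smul_mulVec, dotProduct_sub,
        dotProduct_smul, smul_eq_mul]
      ring
    have : ((((fun i => (m i : ℝ)) ⬝ᵥ (L' *ᵥ a))
        + (iso n A : ℝ) * (a ⬝ᵥ (J' *ᵥ (fun i => (m i : ℝ)))) : ℝ) : AddCircle (1:ℝ))
        = (((a ⬝ᵥ (L' *ᵥ (fun i => (m i : ℝ))))
          + ((A' *ᵥ a) ⬝ᵥ (J' *ᵥ (A' *ᵥ (fun i => (m i : ℝ))))) : ℝ) : AddCircle (1:ℝ)) := by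
      rw [key]
    simpa using this
  · intro a a' a''
    simp only [heta]
    have key : (a ⬝ᵥ (L' *ᵥ a')) + ((a + a') ⬝ᵥ (L' *ᵥ a''))
        = (a' ⬝ᵥ (L' *ᵥ a'')) + (a ⬝ᵥ (L' *ᵥ (a' + a''))) := by
      simp only [Matrix.mulVec_add, dotProduct_add, add_dotProduct]
      ring
    have : (((a ⬝ᵥ (L' *ᵥ a')) + ((a + a') ⬝ᵥ (L' *ᵥ a'')) : ℝ) : AddCircle (1:ℝ))
        = (((a' ⬝ᵥ (L' *ᵥ a'')) + (a ⬝ᵥ (L' *ᵥ (a' + a''))) : ℝ) : AddCircle (1:ℝ)) := by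
      rw [key]
    simpa using this
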